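/- Let p, L, M be positive natural numbers and let A be a p×L complex matrix (A : Matrix (Fin p) (Fin L) ℂ) with full row rank, i.e., A.rank = p. Then the set of L×M complex matrices Z for which the product A * Z fails to have full rank, i.e., {Z : Matrix (Fin L) (Fin M) ℂ | (A * Z).rank ≠ min p M}, has Lebesgue measure (volume) zero. -/

import Mathlib

open MeasureTheory

open MvPolynomial

lemma measurable_mv_eval {ι : Type*} (q : MvPolynomial ι ℂ) :
    Measurable fun x : ι → ℂ => eval x q := by
  induction q using MvPolynomial.induction_on with
  | C c => simp only [eval_C]; exact measurable_const
  | add p q hp hq => have h : Measurable fun x => eval x p + eval x q := hp.add hq; simpa using h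
  | mul_X p n hp => have h : Measurable fun x : ι → ℂ => eval x p * x n := hp.mul (measurable_pi_apply n); simpa using h

lemma mv_eval_zero_null : ∀ (n : ℕ) (q : MvPolynomial (Fin n) ℂ), q ≠ 0 →
    volume {x : Fin n → ℂ | eval x q = 0} = 0 := by
  intro n
  induction n with
  | zero =>
    intro q hq
    obtain ⟨c, rfl⟩ := C_surjective (Fin 0) q
    have hc : c ≠ 0 := fun h => hq (by simp [h])
    have h2 : {x : Fin 0 → ℂ | eval x (C c) = 0} = ∅ := by
      ext x; simp [hc]
    rw [h2, measure_empty]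
  | succ n ih =>
    intro q hq
    set e := MeasurableEquiv.piFinSuccAbove (fun _ : Fin (n+1) => ℂ) 0 with he
    have hmp : MeasurePreserving e volume volume := volume_preserving_piFinSuccAbove _ 0
    have hsymm : ∀ (z : ℂ) (y : Fin n → ℂ), e.symm (z, y) = Fin.cons z y := by
      intro z y
      show (Fin.insertNthEquiv (fun _ => ℂ) 0) (z, y) = Fin.cons z y
      simp [Fin.insertNthEquiv, Fin.insertNth_zero']
    set F := finSuccEquiv ℂ n q with hFdef
    have hF : F ≠ 0 := by
      intro h
      apply hq
      have h2 : finSuccEquiv ℂ n q = finSuccEquiv ℂ n 0 := by rw [map_zero, ← hFdef, h]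
      exact (finSuccEquiv ℂ n).injective h2
    have key : ∀ (z : ℂ) (s : Fin n → ℂ),
        eval (Fin.cons z s) q = eval s (Polynomial.eval (C z) F) := by
      intro z s
      rw [eval_eq_eval_mv_eval' s z q,
        show Polynomial.eval (C z) F = Polynomial.eval₂ (RingHom.id _) (C z) F from rfl,
        Polynomial.hom_eval₂, Polynomial.eval_map]
      simp [hFdef]
    set T : Set (ℂ × (Fin n → ℂ)) := {zy | eval (Fin.cons zy.1 zy.2) q = 0} with hT
    have hTm : MeasurableSet T := by
      have hm : Measurable fun zy : ℂ × (Fin n → ℂ) => eval (Fin.cons zy.1 zy.2) q := by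
        apply (measurable_mv_eval q).comp
        apply measurable_pi_lambda
        intro i
        refine Fin.cases ?_ ?_ i
        · exact measurable_fst
        · intro j; exact (measurable_pi_apply j).comp measurable_snd
      exact hm (measurableSet_singleton 0)
    have hpre : e ⁻¹' T = {x : Fin (n+1) → ℂ | eval x q = 0} := by
      ext x
      have h1 : Fin.cons (e x).1 (e x).2 = x := by
        rw [← hsymm (e x).1 (e x).2]
        exact e.symm_apply_apply x
      simp only [Set.mem_preimage, hT, Set.mem_setOf_eq, h1]
    have hvol : volume {x : Fin (n+1) → ℂ | eval x q = 0} = volume T := by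
      rw [← hpre]
      exact hmp.measure_preimage hTm.nullMeasurableSet
    rw [hvol]
    rw [show (volume : Measure (ℂ × (Fin n → ℂ))) = (volume : Measure ℂ).prod volume from rfl]
    rw [Measure.measure_prod_null hTm]
    have hbad : {z : ℂ | Polynomial.eval (C z) F = 0}.Finite := by
      have : {z : ℂ | Polynomial.eval (C z) F = 0} ⊆ C ⁻¹' {x | Polynomial.IsRoot F x} := by
        intro z hz; exact hz
      exact ((Polynomial.finite_setOf_isRoot hF).preimage (C_injective _ ℂ).injOn).subset this
    have h0 : ∀ᵐ z : ℂ ∂volume, Polynomial.eval (C z) F ≠ 0 := by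
      rw [ae_iff]
      simpa using hbad.measure_zero volume
    filter_upwards [h0] with z hqz
    have hslice : (Prod.mk z ⁻¹' T) = {s : Fin n → ℂ | eval s (Polynomial.eval (C z) F) = 0} := by
      ext s
      simp only [Set.mem_preimage, hT, Set.mem_setOf_eq, key]
    show volume (Prod.mk z ⁻¹' T) = 0
    rw [hslice]
    exact ih _ hqz


lemma mv_eval_zero_null_prod (L M : ℕ) (q : MvPolynomial (Fin L × Fin M) ℂ) (hq : q ≠ 0) :
    volume {x : Fin L × Fin M → ℂ | eval x q = 0} = 0 := by
  set σ : Fin L × Fin M ≃ Fin (L * M) := finProdFinEquiv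
  set u := MeasurableEquiv.piCongrLeft (fun _ : Fin (L * M) => ℂ) σ with hu
  have hmp : MeasurePreserving u volume volume :=
    volume_measurePreserving_piCongrLeft (fun _ : Fin (L * M) => ℂ) σ
  have happ : ∀ (x : Fin L × Fin M → ℂ), (u x) ∘ σ = x := by
    intro x
    funext i
    show (Equiv.piCongrLeft (fun _ => ℂ) σ) x (σ i) = x i
    exact Equiv.piCongrLeft_apply_apply (fun _ => ℂ) σ x i
  have hq' : rename σ q ≠ 0 := by
    intro h
    exact hq (rename_injective σ σ.injective (by rw [h, map_zero]))
  have hpre : {x : Fin L × Fin M → ℂ | eval x q = 0}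
      = u ⁻¹' {w : Fin (L * M) → ℂ | eval w (rename σ q) = 0} := by
    ext x
    simp only [Set.mem_setOf_eq, Set.mem_preimage, eval_rename, happ x]
  have hms : MeasurableSet {w : Fin (L * M) → ℂ | eval w (rename σ q) = 0} := by
    exact (measurable_mv_eval _) (measurableSet_singleton 0)
  rw [hpre, hmp.measure_preimage hms.nullMeasurableSet]
  exact mv_eval_zero_null _ _ hq'

lemma mp_uncurry (M : ℕ) : ∀ L : ℕ, MeasurePreserving
    (fun (Z : Fin L → Fin M → ℂ) (pr : Fin L × Fin M) => Z pr.1 pr.2) volume volume := by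
  intro L
  induction L with
  | zero =>
    haveI : IsEmpty (Fin 0 × Fin M) := ⟨fun pr => pr.1.elim0⟩
    constructor
    · exact measurable_of_countable _
    · have h1 : (volume : Measure (Fin 0 → Fin M → ℂ)) = Measure.dirac isEmptyElim :=
        Measure.pi_of_empty _
      have h2 : (volume : Measure (Fin 0 × Fin M → ℂ)) = Measure.dirac isEmptyElim :=
        Measure.pi_of_empty _
      rw [h1, h2, Measure.map_dirac' (measurable_of_countable _)]
      congr 1
      exact Subsingleton.elim _ _
  | succ L ih =>
    set σ : (Fin M ⊕ Fin L × Fin M) ≃ Fin (L+1) × Fin M :=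
      { toFun := Sum.elim (fun j => ((0 : Fin (L+1)), j)) (fun pr => (pr.1.succ, pr.2))
        invFun := fun q => Fin.cases (Sum.inl q.2) (fun i => Sum.inr (i, q.2)) q.1
        left_inv := by rintro (j | ⟨i, j⟩) <;> simp
        right_inv := by
          rintro ⟨i, j⟩
          refine Fin.cases ?_ ?_ i <;> simp } with hσ
    have m1 : MeasurePreserving (MeasurableEquiv.piFinSuccAbove
        (fun _ : Fin (L+1) => (Fin M → ℂ)) 0) volume volume :=
      volume_preserving_piFinSuccAbove _ 0
    have m2 : MeasurePreserving (Prod.map (id : (Fin M → ℂ) → (Fin M → ℂ))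
        (fun (Z : Fin L → Fin M → ℂ) (pr : Fin L × Fin M) => Z pr.1 pr.2))
        volume volume := (MeasurePreserving.id volume).prod ih
    have m3 : MeasurePreserving
        ((MeasurableEquiv.sumPiEquivProdPi (fun _ : Fin M ⊕ Fin L × Fin M => ℂ)).symm)
        volume volume := by
      have := measurePreserving_sumPiEquivProdPi_symm
        (X := fun _ : Fin M ⊕ Fin L × Fin M => ℂ) (μ := fun _ => volume)
      exact this
    have m4 : MeasurePreserving
        (MeasurableEquiv.piCongrLeft (fun _ : Fin (L+1) × Fin M => ℂ) σ) volume volume :=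
      volume_measurePreserving_piCongrLeft _ σ
    have hcomp := ((m4.comp m3).comp m2).comp m1
    convert hcomp using 1
    funext Z
    funext q
    show Z q.1 q.2 = (MeasurableEquiv.piCongrLeft (fun _ : Fin (L+1) × Fin M => ℂ) σ) _ q
    have hq : q = σ (σ.symm q) := (σ.apply_symm_apply q).symm
    rw [hq]
    rw [show ((MeasurableEquiv.piCongrLeft (fun _ : Fin (L+1) × Fin M => ℂ) σ) _ (σ (σ.symm q)) : ℂ)
      = _ from Equiv.piCongrLeft_apply_apply (fun _ => ℂ) σ _ (σ.symm q)]
    obtain ⟨i, j⟩ := q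
    refine Fin.cases ?_ ?_ i
    · simp [hσ, MeasurableEquiv.sumPiEquivProdPi, Equiv.sumPiEquivProdPi,
        MeasurableEquiv.piFinSuccAbove]
    · intro k
      simp [hσ, MeasurableEquiv.sumPiEquivProdPi, Equiv.sumPiEquivProdPi,
        MeasurableEquiv.piFinSuccAbove, Fin.succAbove, Fin.tail]


noncomputable instance matrixMeasureSpace {n m : Type*} [Fintype n] [Fintype m] :
    MeasureSpace (Matrix n m ℂ) :=
  inferInstanceAs (MeasureSpace (n → m → ℂ))

theorem rank_deficient_product_null (p L M : ℕ) (hp : 0 < p) (hL : 0 < L) (hM : 0 < M)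
    (A : Matrix (Fin p) (Fin L) ℂ) (hA : A.rank = p) :
    volume {Z : Matrix (Fin L) (Fin M) ℂ | (A * Z).rank ≠ min p M} = 0 := by
  set k := min p M with hk
  have hkp : k ≤ p := min_le_left _ _
  have hkM : k ≤ M := min_le_right _ _
  set r : Fin k → Fin p := Fin.castLE hkp with hr
  set c : Fin k → Fin M := Fin.castLE hkM with hc
  set N : Matrix (Fin k) (Fin k) (MvPolynomial (Fin L × Fin M) ℂ) :=
    Matrix.of fun i j => ∑ l : Fin L, C (A (r i) l) * X (l, c j) with hN
  set q : MvPolynomial (Fin L × Fin M) ℂ := N.det with hqdef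
  -- evaluation of q at a matrix gives the minor determinant
  have evalq : ∀ Z : Matrix (Fin L) (Fin M) ℂ,
      eval (fun pr : Fin L × Fin M => Z pr.1 pr.2) q = ((A * Z).submatrix r c).det := by
    intro Z
    rw [hqdef, RingHom.map_det]
    congr 1
    ext i j
    simp [hN, Matrix.mul_apply]
  -- a nonzero minor forces full rank
  have rank_eq : ∀ Z : Matrix (Fin L) (Fin M) ℂ,
      ((A * Z).submatrix r c).det ≠ 0 → (A * Z).rank = k := by
    intro Z hdet
    have hle : (A * Z).rank ≤ k := by
      refine le_min ?_ ?_
      · calc (A * Z).rank ≤ A.rank := Matrix.rank_mul_le_left A Z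
          _ = p := hA
      · calc (A * Z).rank ≤ Z.rank := Matrix.rank_mul_le_right A Z
          _ ≤ Fintype.card (Fin M) := Matrix.rank_le_card_width Z
          _ = M := Fintype.card_fin M
    have hsubrank : ((A * Z).submatrix r c).rank = k := by
      rw [Matrix.rank_of_isUnit _ ((Matrix.isUnit_iff_isUnit_det _).mpr hdet.isUnit),
        Fintype.card_fin]
    have hfact : (A * Z).submatrix r c
        = ((1 : Matrix (Fin p) (Fin p) ℂ).submatrix r id) * (A * Z)
          * ((1 : Matrix (Fin M) (Fin M) ℂ).submatrix id c) := by
      ext i j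
      rw [Matrix.mul_apply]
      simp only [Matrix.mul_apply, Matrix.submatrix_apply, id_eq, Matrix.one_apply]
      simp [mul_ite, ite_mul, mul_one, one_mul, mul_zero, zero_mul, Finset.sum_ite_eq,
        Finset.sum_ite_eq']
    have hge : k ≤ (A * Z).rank := by
      calc k = ((A * Z).submatrix r c).rank := hsubrank.symm
        _ ≤ (((1 : Matrix (Fin p) (Fin p) ℂ).submatrix r id) * (A * Z)).rank := by
            rw [hfact]; exact Matrix.rank_mul_le_left _ _
        _ ≤ (A * Z).rank := Matrix.rank_mul_le_right _ _
    exact le_antisymm hle hge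
  -- construct a witness showing q ≠ 0
  have hsurj : Function.Surjective A.mulVecLin := by
    rw [← LinearMap.range_eq_top]
    apply Submodule.eq_top_of_finrank_eq
    rw [← Matrix.rank, hA, Module.finrank_pi]
    simp
  set B : Matrix (Fin L) (Fin p) ℂ :=
    Matrix.of fun l i => Function.surjInv hsurj (Pi.single i 1) l with hB
  have hAB : A * B = 1 := by
    ext i' i
    have h := congrFun (Function.surjInv_eq hsurj (Pi.single i (1 : ℂ))) i'
    simp only [Matrix.mulVecLin_apply, Matrix.mulVec, dotProduct] at h
    rw [Matrix.mul_apply, Matrix.one_apply]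
    have hsingle : (Pi.single i (1:ℂ) : Fin p → ℂ) i' = if i' = i then 1 else 0 :=
      Pi.single_apply i 1 i'
    rw [show (if i' = i then (1:ℂ) else 0) = (Pi.single i (1:ℂ) : Fin p → ℂ) i' from hsingle.symm]
    exact h
  set E : Matrix (Fin p) (Fin M) ℂ :=
    Matrix.of fun i j => if (i : ℕ) = (j : ℕ) then 1 else 0 with hE
  have hAZ0 : A * (B * E) = E := by rw [← Matrix.mul_assoc, hAB, Matrix.one_mul]
  have hq : q ≠ 0 := by
    intro h0
    have h1 := evalq (B * E)
    rw [h0, map_zero, hAZ0] at h1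
    have h2 : E.submatrix r c = (1 : Matrix (Fin k) (Fin k) ℂ) := by
      ext i j
      simp only [Matrix.submatrix_apply, hE, Matrix.of_apply, Matrix.one_apply, hr, hc,
        Fin.coe_castLE]
      simp [Fin.ext_iff]
    rw [h2, Matrix.det_one] at h1
    exact one_ne_zero h1.symm
  -- reduce to the polynomial zero set
  have hsubset : {Z : Matrix (Fin L) (Fin M) ℂ | (A * Z).rank ≠ k}
      ⊆ {Z : Matrix (Fin L) (Fin M) ℂ | eval (fun pr : Fin L × Fin M => Z pr.1 pr.2) q = 0} := by
    intro Z hZ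
    by_contra hne
    apply hZ
    apply rank_eq Z
    rw [← evalq Z]
    exact hne
  refine measure_mono_null hsubset ?_
  have hms : MeasurableSet {x : Fin L × Fin M → ℂ | eval x q = 0} := by
    exact (measurable_mv_eval q) (measurableSet_singleton 0)
  have hId : {Z : Matrix (Fin L) (Fin M) ℂ | eval (fun pr : Fin L × Fin M => Z pr.1 pr.2) q = 0}
      = (fun (Z : Fin L → Fin M → ℂ) (pr : Fin L × Fin M) => Z pr.1 pr.2)
        ⁻¹' {x : Fin L × Fin M → ℂ | eval x q = 0} := rfl
  have hfin := (mp_uncurry M L).measure_preimage hms.nullMeasurableSet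
  rw [hId]
  exact hfin.trans (mv_eval_zero_null_prod L M q hq)
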